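/- Let k ∈ ℝ with 0 < k < 1, η = 2√2 k K(k)/π and ω = 4(1+k²)K²(k)/π². Then φ(x) = η · sn(2K(k)x/π, k) is a 2π-periodic solution of φ'' + ω φ - φ³ = 0 (i.e., of the equation (-Δ)φ - ωφ + φ³ = 0, the s = 1 case). -/

import Mathlib

open Real

/-- The snoidal profile `φ(x) = η sn(2K(k)x/π, k)` is a `2π`-periodic solution of
`φ'' + ωφ - φ³ = 0` with `η = 2√2 k K(k)/π` and `ω = 4(1+k²)K(k)²/π²`. -/
theorem stmt6 (k K : ℝ) (hk : 0 < k ∧ k < 1) (hK : 0 < K)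
    (sn : ℝ → ℝ) (hsmooth : ContDiff ℝ 2 sn)
    (hsn : ∀ x, deriv (deriv sn) x = -(1 + k ^ 2) * sn x + 2 * k ^ 2 * (sn x) ^ 3)
    (hper : ∀ x, sn (x + 4 * K) = sn x) :
    (∀ x, deriv (deriv (fun y => (2 * Real.sqrt 2 * k * K / π) * sn (2 * K * y / π))) x
        + (4 * (1 + k ^ 2) * K ^ 2 / π ^ 2) *
            ((2 * Real.sqrt 2 * k * K / π) * sn (2 * K * x / π))
        - ((2 * Real.sqrt 2 * k * K / π) * sn (2 * K * x / π)) ^ 3 = 0) ∧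
    (∀ x, (2 * Real.sqrt 2 * k * K / π) * sn (2 * K * (x + 2 * π) / π)
        = (2 * Real.sqrt 2 * k * K / π) * sn (2 * K * x / π)) := by
  have hpi : (π : ℝ) ≠ 0 := Real.pi_ne_zero
  set c : ℝ := 2 * Real.sqrt 2 * k * K / π with hc
  set a : ℝ := 2 * K / π with ha
  have hd1 : Differentiable ℝ sn := hsmooth.differentiable (by norm_num)
  have hd2 : Differentiable ℝ (deriv sn) := by
    have h2 : ContDiff ℝ ((1 : ℕ∞) + 1) sn := by exact_mod_cast hsmooth
    have := (contDiff_succ_iff_deriv.mp h2).2.2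
    exact this.differentiable (by norm_num)
  -- general chain rule helper
  have key : ∀ (f : ℝ → ℝ), Differentiable ℝ f → ∀ (b : ℝ) (x : ℝ),
      deriv (fun y => b * f (a * y)) x = b * a * deriv f (a * x) := by
    intro f hf b x
    have h1 : HasDerivAt (fun y : ℝ => a * y) (a * 1) x := (hasDerivAt_id x).const_mul a
    have h2 : HasDerivAt (fun y => f (a * y)) (deriv f (a * x) * (a * 1)) x :=
      (hf (a * x)).hasDerivAt.comp x h1
    have h3 := h2.const_mul b
    rw [h3.deriv]; ring
  have heq : (fun y => c * sn (2 * K * y / π)) = (fun y => c * sn (a * y)) := by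
    funext y
    have : 2 * K * y / π = a * y := by rw [ha]; ring
    rw [this]
  constructor
  · intro x
    have hax : 2 * K * x / π = a * x := by rw [ha]; ring
    rw [heq, hax]
    have hfirst : deriv (fun y => c * sn (a * y)) = fun y => (c * a) * deriv sn (a * y) := by
      funext y; exact key sn hd1 c y
    rw [hfirst, key (deriv sn) hd2 (c * a) x, hsn]
    have hs2 : Real.sqrt 2 ^ 2 = 2 := Real.sq_sqrt (by norm_num)
    have hca : c = Real.sqrt 2 * k * a := by rw [hc, ha]; ring
    have hw : 4 * (1 + k ^ 2) * K ^ 2 / π ^ 2 = (1 + k ^ 2) * a ^ 2 := by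
      rw [ha]; field_simp; ring
    rw [hca, hw]
    linear_combination (-(Real.sqrt 2) * k ^ 3 * a ^ 3 * (sn (a * x)) ^ 3) * hs2
  · intro x
    have : 2 * K * (x + 2 * π) / π = 2 * K * x / π + 4 * K := by field_simp; ring
    rw [this, hper]
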